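/- Let n ≥ 1, let f be a probability density on ℝ, and let g be another probability density on ℝ with cdf G and order statistic densities g_(i)(x) = i·C(n,i)·G(x)^{i-1}·(1-G(x))^{n-i}·g(x). Suppose all KL integrals below exist. Then the KL information between an SRS from f and an SRS from g is at most that between an SRS from f and a perfect RSS from g: n·K(f,g) ≤ Σ_{i=1}^n K(f, g_(i)). -/

import Mathlib

open MeasureTheory Real

/-- Cumulative distribution function of a density `g`. -/
noncomputable def cdfOf (g : ℝ → ℝ) (x : ℝ) : ℝ := ∫ t in Set.Iic x, g t

/-- Density of the `i`-th order statistic from a sample of size `n` with parent density `g`. -/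
noncomputable def osDen (g : ℝ → ℝ) (n i : ℕ) (x : ℝ) : ℝ :=
  (i : ℝ) * (n.choose i : ℝ) * (cdfOf g x) ^ (i - 1) * (1 - cdfOf g x) ^ (n - i) * g x

/-- Kullback–Leibler divergence between densities `p` and `q`. -/
noncomputable def KL (p q : ℝ → ℝ) : ℝ := ∫ x, p x * Real.log (p x / q x)

/-- Sum of the order-statistic weights equals `n`. -/
lemma sum_weights (n : ℕ) (hn : 1 ≤ n) (t : ℝ) :
    ∑ i ∈ Finset.Icc 1 n, (i : ℝ) * (n.choose i : ℝ) * t ^ (i - 1) * (1 - t) ^ (n - i)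
      = (n : ℝ) := by
  obtain ⟨m, rfl⟩ : ∃ m, n = m + 1 := ⟨n - 1, (Nat.succ_pred_eq_of_pos hn).symm⟩
  rw [← Finset.Ico_add_one_right_eq_Icc, Finset.sum_Ico_eq_sum_range, Nat.add_sub_cancel]
  have hred : ∀ j ∈ Finset.range (m + 1),
      ((1 + j : ℕ) : ℝ) * ((m + 1).choose (1 + j) : ℝ) * t ^ (1 + j - 1)
        * (1 - t) ^ (m + 1 - (1 + j))
      = ((m : ℝ) + 1) * ((m.choose j : ℝ) * (t ^ j * (1 - t) ^ (m - j))) := by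
    intro j _
    have h1 : (1 + j : ℕ) * (m + 1).choose (1 + j) = (m + 1) * m.choose j := by
      have h := Nat.add_one_mul_choose_eq m j
      rw [Nat.add_comm 1 j, h]
      ring
    have h2 : 1 + j - 1 = j := by omega
    have h3 : m + 1 - (1 + j) = m - j := by omega
    have h1' : ((1 + j : ℕ) : ℝ) * ((m + 1).choose (1 + j) : ℝ)
        = ((m : ℝ) + 1) * (m.choose j : ℝ) := by exact_mod_cast h1
    rw [h2, h3, show ((1 + j : ℕ) : ℝ) * ((m + 1).choose (1 + j) : ℝ) * t ^ j
        * (1 - t) ^ (m - j) = (((1 + j : ℕ) : ℝ) * ((m + 1).choose (1 + j) : ℝ))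
        * (t ^ j * (1 - t) ^ (m - j)) by ring, h1']
    ring
  rw [Finset.sum_congr rfl hred, ← Finset.mul_sum]
  have hbin : ∑ j ∈ Finset.range (m + 1), (m.choose j : ℝ) * (t ^ j * (1 - t) ^ (m - j))
      = 1 := by
    have h := add_pow t (1 - t) m
    rw [show t + (1 - t) = (1 : ℝ) by ring, one_pow] at h
    exact (Finset.sum_congr rfl fun j _ => by ring).trans h.symm
  rw [hbin]
  push_cast
  ring

/-- If the cdf vanishes at `x`, then `g` vanishes a.e. on `Iic x`. -/
lemma null_Iic (g : ℝ → ℝ) (hg_nonneg : ∀ x, 0 ≤ g x) (hg_i : Integrable g)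
    {x : ℝ} (hx : cdfOf g x = 0) :
    MeasureTheory.volume ({y | g y ≠ 0} ∩ Set.Iic x) = 0 := by
  have h0 : g =ᵐ[MeasureTheory.volume.restrict (Set.Iic x)] 0 :=
    (MeasureTheory.setIntegral_eq_zero_iff_of_nonneg_ae
      (Filter.Eventually.of_forall fun y => hg_nonneg y) hg_i.integrableOn).mp hx
  have h1 : ∀ᵐ y, y ∈ Set.Iic x → g y = 0 :=
    (MeasureTheory.ae_restrict_iff' measurableSet_Iic).mp h0
  rw [Filter.eventually_iff, mem_ae_iff] at h1
  refine measure_mono_null ?_ h1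
  intro y hy
  simp only [Set.mem_compl_iff, Set.mem_setOf_eq]
  intro h
  exact hy.1 (h hy.2)

/-- If the cdf equals 1 at `x`, then `g` vanishes a.e. on `Ioi x`. -/
lemma null_Ioi (g : ℝ → ℝ) (hg_nonneg : ∀ x, 0 ≤ g x) (hg_i : Integrable g)
    (hg_int : ∫ x, g x = 1) {x : ℝ} (hx : cdfOf g x = 1) :
    MeasureTheory.volume ({y | g y ≠ 0} ∩ Set.Ioi x) = 0 := by
  have hcompl := MeasureTheory.integral_add_compl (s := Set.Iic x) (f := g) measurableSet_Iic hg_i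
  rw [Set.compl_Iic, hg_int] at hcompl
  have hz : ∫ y in Set.Ioi x, g y = 0 := by
    have : cdfOf g x = ∫ y in Set.Iic x, g y := rfl
    rw [← this, hx] at hcompl; linarith
  have h0 : g =ᵐ[MeasureTheory.volume.restrict (Set.Ioi x)] 0 :=
    (MeasureTheory.setIntegral_eq_zero_iff_of_nonneg_ae
      (Filter.Eventually.of_forall fun y => hg_nonneg y) hg_i.integrableOn).mp hz
  have h1 : ∀ᵐ y, y ∈ Set.Ioi x → g y = 0 :=
    (MeasureTheory.ae_restrict_iff' measurableSet_Ioi).mp h0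
  rw [Filter.eventually_iff, mem_ae_iff] at h1
  refine measure_mono_null ?_ h1
  intro y hy
  simp only [Set.mem_compl_iff, Set.mem_setOf_eq]
  intro h
  exact hy.1 (h hy.2)

lemma cdf_mono (g : ℝ → ℝ) (hg_nonneg : ∀ x, 0 ≤ g x) (hg_i : Integrable g) :
    Monotone (cdfOf g) := by
  intro a b hab
  exact MeasureTheory.setIntegral_mono_set hg_i.integrableOn
    (Filter.Eventually.of_forall fun y => hg_nonneg y)
    (Filter.Eventually.of_forall (Set.Iic_subset_Iic.mpr hab))

lemma cdf_nonneg (g : ℝ → ℝ) (hg_nonneg : ∀ x, 0 ≤ g x) (x : ℝ) : 0 ≤ cdfOf g x :=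
  MeasureTheory.setIntegral_nonneg measurableSet_Iic fun y _ => hg_nonneg y

lemma cdf_le_one (g : ℝ → ℝ) (hg_nonneg : ∀ x, 0 ≤ g x) (hg_i : Integrable g)
    (hg_int : ∫ x, g x = 1) (x : ℝ) : cdfOf g x ≤ 1 := by
  have := MeasureTheory.setIntegral_le_integral (s := Set.Iic x) hg_i
    (Filter.Eventually.of_forall fun y => hg_nonneg y)
  rwa [hg_int] at this

/-- The set where `g` is positive but the cdf is `0` is null. -/
lemma bad_left_null (g : ℝ → ℝ) (hg_nonneg : ∀ x, 0 ≤ g x) (hg_i : Integrable g) :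
    MeasureTheory.volume {x | g x ≠ 0 ∧ cdfOf g x = 0} = 0 := by
  set A := {y : ℝ | cdfOf g y = 0} with hA
  have hcover : {x | g x ≠ 0 ∧ cdfOf g x = 0} ⊆
      {sSup A} ∪ ⋃ q : ℚ, {y | g y ≠ 0 ∧ y ≤ (q : ℝ) ∧ cdfOf g (q : ℝ) = 0} := by
    rintro x ⟨hgx, hx⟩
    by_cases h : ∃ y, cdfOf g y = 0 ∧ x < y
    · obtain ⟨y, hy0, hxy⟩ := h
      obtain ⟨q, hq1, hq2⟩ := exists_rat_btwn hxy
      right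
      refine Set.mem_iUnion.mpr ⟨q, hgx, hq1.le, le_antisymm ?_ (cdf_nonneg g hg_nonneg _)⟩
      calc cdfOf g (q : ℝ) ≤ cdfOf g y := cdf_mono g hg_nonneg hg_i hq2.le
        _ = 0 := hy0
    · left
      push_neg at h
      have hgrt : IsGreatest A x := ⟨hx, fun y hy => (h y hy)⟩
      simp [hgrt.csSup_eq]
  refine measure_mono_null hcover (measure_union_null (measure_singleton _)
    (measure_iUnion_null fun q => ?_))
  by_cases hq : cdfOf g (q : ℝ) = 0
  · refine measure_mono_null ?_ (null_Iic g hg_nonneg hg_i hq)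
    rintro y ⟨h1, h2, _⟩
    exact ⟨h1, h2⟩
  · have : {y | g y ≠ 0 ∧ y ≤ (q : ℝ) ∧ cdfOf g (q : ℝ) = 0} = ∅ := by
      ext y; simp [hq]
    simp [this]

/-- The set where `g` is positive but the cdf is `1` is null. -/
lemma bad_right_null (g : ℝ → ℝ) (hg_nonneg : ∀ x, 0 ≤ g x) (hg_i : Integrable g)
    (hg_int : ∫ x, g x = 1) :
    MeasureTheory.volume {x | g x ≠ 0 ∧ cdfOf g x = 1} = 0 := by
  set A := {y : ℝ | cdfOf g y = 1} with hA
  have hcover : {x | g x ≠ 0 ∧ cdfOf g x = 1} ⊆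
      {sInf A} ∪ ⋃ q : ℚ, {y | g y ≠ 0 ∧ (q : ℝ) < y ∧ cdfOf g (q : ℝ) = 1} := by
    rintro x ⟨hgx, hx⟩
    by_cases h : ∃ y, cdfOf g y = 1 ∧ y < x
    · obtain ⟨y, hy0, hxy⟩ := h
      obtain ⟨q, hq1, hq2⟩ := exists_rat_btwn hxy
      right
      refine Set.mem_iUnion.mpr ⟨q, hgx, hq2, le_antisymm
        (cdf_le_one g hg_nonneg hg_i hg_int _) ?_⟩
      calc (1 : ℝ) = cdfOf g y := hy0.symm
        _ ≤ cdfOf g (q : ℝ) := cdf_mono g hg_nonneg hg_i hq1.le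
    · left
      push_neg at h
      have hlst : IsLeast A x := ⟨hx, fun y hy => (h y hy)⟩
      simp [hlst.csInf_eq]
  refine measure_mono_null hcover (measure_union_null (measure_singleton _)
    (measure_iUnion_null fun q => ?_))
  by_cases hq : cdfOf g (q : ℝ) = 1
  · refine measure_mono_null ?_ (null_Ioi g hg_nonneg hg_i hg_int hq)
    rintro y ⟨h1, h2, _⟩
    exact ⟨h1, h2⟩
  · have : {y | g y ≠ 0 ∧ (q : ℝ) < y ∧ cdfOf g (q : ℝ) = 1} = ∅ := by
      ext y; simp [hq]
    simp [this]

/-- The KL information between an SRS from `f` and an SRS from `g` is at most that between an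
SRS from `f` and a perfect RSS from `g`: `n·K(f,g) ≤ Σ_{i=1}^n K(f, g_(i))`. -/
theorem KL_SRS_SRS_le_KL_SRS_RSS (n : ℕ) (hn : 1 ≤ n) (f g : ℝ → ℝ)
    (hf_meas : Measurable f) (hf_nonneg : ∀ x, 0 ≤ f x) (hf_int : ∫ x, f x = 1)
    (hg_meas : Measurable g) (hg_nonneg : ∀ x, 0 ≤ g x) (hg_int : ∫ x, g x = 1)
    (hfg : Integrable (fun x => f x * Real.log (f x / g x)))
    (hfgi : ∀ i ∈ Finset.Icc 1 n,
      Integrable (fun x => f x * Real.log (f x / osDen g n i x))) :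
    (n : ℝ) * KL f g ≤ ∑ i ∈ Finset.Icc 1 n, KL f (osDen g n i) := by
  have hg_i : Integrable g := by
    by_contra h
    rw [MeasureTheory.integral_undef h] at hg_int
    norm_num at hg_int
  -- almost-everywhere pointwise inequality
  have hae0 : ∀ᵐ x, ¬ (g x ≠ 0 ∧ cdfOf g x = 0) := by
    rw [Filter.eventually_iff, mem_ae_iff]
    rw [show {x | ¬ (g x ≠ 0 ∧ cdfOf g x = 0)}ᶜ = {x | g x ≠ 0 ∧ cdfOf g x = 0} by
      ext x; simp [and_comm]]
    exact bad_left_null g hg_nonneg hg_i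
  have hae1 : ∀ᵐ x, ¬ (g x ≠ 0 ∧ cdfOf g x = 1) := by
    rw [Filter.eventually_iff, mem_ae_iff]
    rw [show {x | ¬ (g x ≠ 0 ∧ cdfOf g x = 1)}ᶜ = {x | g x ≠ 0 ∧ cdfOf g x = 1} by
      ext x; simp [and_comm]]
    exact bad_right_null g hg_nonneg hg_i hg_int
  have hae : ∀ᵐ x, (n : ℝ) * (f x * Real.log (f x / g x))
      ≤ ∑ i ∈ Finset.Icc 1 n, f x * Real.log (f x / osDen g n i x) := by
    filter_upwards [hae0, hae1] with x hx0 hx1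
    by_cases hgx : g x = 0
    · simp [osDen, hgx]
    · have hg' : 0 < g x := (hg_nonneg x).lt_of_ne (Ne.symm hgx)
      have ht0 : 0 < cdfOf g x :=
        (cdf_nonneg g hg_nonneg x).lt_of_ne (fun h => hx0 ⟨hgx, h.symm⟩)
      have ht1 : cdfOf g x < 1 :=
        (cdf_le_one g hg_nonneg hg_i hg_int x).lt_of_ne (fun h => hx1 ⟨hgx, h⟩)
      by_cases hfx : f x = 0
      · simp [hfx]
      · have hf' : 0 < f x := (hf_nonneg x).lt_of_ne (Ne.symm hfx)
        set t := cdfOf g x with htdef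
        set w : ℕ → ℝ := fun i => (i : ℝ) * (n.choose i : ℝ) * t ^ (i - 1) * (1 - t) ^ (n - i)
          with hwdef
        have hw : ∀ i ∈ Finset.Icc 1 n, 0 < w i := by
          intro i hi
          rw [Finset.mem_Icc] at hi
          have hi1 : 0 < (i : ℝ) := by exact_mod_cast hi.1
          have hc : 0 < (n.choose i : ℝ) := by
            exact_mod_cast Nat.choose_pos hi.2
          have h1t : 0 < 1 - t := by linarith
          positivity
        have hlog : ∀ i ∈ Finset.Icc 1 n, f x * Real.log (f x / osDen g n i x)
            = f x * Real.log (f x / g x) - f x * Real.log (w i) := by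
          intro i hi
          have hwi := hw i hi
          have hos : osDen g n i x = w i * g x := rfl
          rw [hos, show f x / (w i * g x) = f x / g x / w i by
            rw [div_div, mul_comm (w i) (g x)]]
          rw [Real.log_div (by positivity) hwi.ne', mul_sub]
        rw [Finset.sum_congr rfl hlog, Finset.sum_sub_distrib, Finset.sum_const,
          Nat.card_Icc, Nat.add_sub_cancel, nsmul_eq_mul]
        have hsum : ∑ i ∈ Finset.Icc 1 n, f x * Real.log (w i) ≤ 0 := by
          rw [← Finset.mul_sum]
          have hls : ∑ i ∈ Finset.Icc 1 n, Real.log (w i)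
              ≤ ∑ i ∈ Finset.Icc 1 n, (w i - 1) :=
            Finset.sum_le_sum fun i hi => Real.log_le_sub_one_of_pos (hw i hi)
          have hws : ∑ i ∈ Finset.Icc 1 n, (w i - 1) = 0 := by
            rw [Finset.sum_sub_distrib, Finset.sum_const, Nat.card_Icc,
              Nat.add_sub_cancel, nsmul_eq_mul, mul_one]
            rw [sum_weights n hn t]
            ring
          have := hls.trans hws.le
          exact mul_nonpos_of_nonneg_of_nonpos (hf_nonneg x) this
        linarith
  have hint1 : Integrable (fun x => (n : ℝ) * (f x * Real.log (f x / g x))) :=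
    hfg.const_mul _
  have hint2 : Integrable
      (fun x => ∑ i ∈ Finset.Icc 1 n, f x * Real.log (f x / osDen g n i x)) :=
    MeasureTheory.integrable_finset_sum _ hfgi
  calc (n : ℝ) * KL f g = ∫ x, (n : ℝ) * (f x * Real.log (f x / g x)) := by
        rw [KL, MeasureTheory.integral_const_mul]
    _ ≤ ∫ x, ∑ i ∈ Finset.Icc 1 n, f x * Real.log (f x / osDen g n i x) :=
        MeasureTheory.integral_mono_ae hint1 hint2 hae
    _ = ∑ i ∈ Finset.Icc 1 n, KL f (osDen g n i) := by
        rw [MeasureTheory.integral_finset_sum _ hfgi]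
        rfl
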